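/- The function u₁(r) = R_s c_s'(r)/(r c_s'(R_s)) for 0 < r ≤ R_s, extended by continuity at r = 0 with value R_s c_s''(0)/c_s'(R_s), is the unique function u ∈ C([0,R_s];ℝ) ∩ C²((0,R_s);ℝ) satisfying u''(r) + ((n+1)/r)u'(r) = F'(c_s(r))u(r) for 0 < r < R_s, lim_{r→0⁺} u'(r) = 0, and u(R_s) = 1. (Lemma 3.3, assertion (4).) -/

import Mathlib

open Set Real Filter Topology

lemma maxp (Rs : ℝ) (hRs : 0 < Rs) (m : ℕ) (q : ℝ → ℝ)
    (hq : ∀ r ∈ Ioo (0:ℝ) Rs, 0 < q r)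
    (w w' w'' : ℝ → ℝ)
    (hwc : ContinuousOn w (Icc 0 Rs))
    (hw1 : ∀ r ∈ Ioo (0:ℝ) Rs, HasDerivAt w (w' r) r)
    (hw2 : ∀ r ∈ Ioo (0:ℝ) Rs, HasDerivAt w' (w'' r) r)
    (hode : ∀ r ∈ Ioo (0:ℝ) Rs, w'' r + (((m:ℝ)+1) / r) * w' r = q r * w r)
    (hlim : Tendsto w' (𝓝[>] (0:ℝ)) (𝓝 0))
    (hwRs : w Rs = 0) :
    ∀ r ∈ Icc (0:ℝ) Rs, w r ≤ 0 := by
  by_contra hcon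
  push_neg at hcon
  obtain ⟨r₁, hr₁, hr₁pos⟩ := hcon
  obtain ⟨r₀, hr₀mem, hmax⟩ := isCompact_Icc.exists_isMaxOn (nonempty_Icc.2 hRs.le) hwc
  have hM : 0 < w r₀ := lt_of_lt_of_le hr₁pos (hmax hr₁)
  have hr₀0 : 0 ≤ r₀ := hr₀mem.1
  set g : ℝ → ℝ := fun s => s^(m+1) * w' s with hgdef
  have hSclosed : IsClosed (Icc r₀ Rs ∩ w ⁻¹' {0}) :=
    (hwc.mono (Icc_subset_Icc hr₀0 le_rfl)).preimage_isClosed_of_isClosed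
      isClosed_Icc isClosed_singleton
  have hSne : (Icc r₀ Rs ∩ w ⁻¹' {0}).Nonempty := ⟨Rs, ⟨hr₀mem.2, le_rfl⟩, hwRs⟩
  have hSbdd : BddBelow (Icc r₀ Rs ∩ w ⁻¹' {0}) := ⟨r₀, fun x hx => hx.1.1⟩
  set b := sInf (Icc r₀ Rs ∩ w ⁻¹' {0}) with hbdef
  have hbmem : b ∈ Icc r₀ Rs ∩ w ⁻¹' {0} := hSclosed.csInf_mem hSne hSbdd
  have hwb : w b = 0 := hbmem.2
  have hr₀b : r₀ < b := lt_of_le_of_ne hbmem.1.1 (fun h => (ne_of_gt hM) (h ▸ hwb))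
  have hbRs : b ≤ Rs := hbmem.1.2
  -- w > 0 on [r₀, b)
  have hwpos : ∀ r ∈ Ico r₀ b, 0 < w r := by
    intro r hr
    by_contra hle
    push_neg at hle
    rcases hle.lt_or_eq with hlt | heq
    · obtain ⟨z, hzmem, hz0⟩ :=
        intermediate_value_Icc' hr.1 (hwc.mono (Icc_subset_Icc hr₀0 (le_trans hr.2.le hbRs)))
          ⟨hlt.le, hM.le⟩
      have : b ≤ z := csInf_le hSbdd ⟨⟨hzmem.1, le_trans hzmem.2 (le_trans hr.2.le hbRs)⟩, hz0⟩
      exact absurd (lt_of_le_of_lt (this.trans hzmem.2) hr.2) (lt_irrefl b)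
    · have : b ≤ r := csInf_le hSbdd ⟨⟨hr.1, le_trans hr.2.le hbRs⟩, heq⟩
      exact absurd hr.2 (not_lt.2 this)
  -- g → 0 at r₀⁺
  have hg0 : Tendsto g (𝓝[>] r₀) (𝓝 0) := by
    rcases hr₀0.lt_or_eq with h0 | h0
    · -- r₀ > 0
      have hr₀Ioo : r₀ ∈ Ioo 0 Rs := ⟨h0, lt_of_lt_of_le hr₀b hbRs⟩
      have hloc : IsLocalMax w r₀ :=
        hmax.isLocalMax (Icc_mem_nhds h0 hr₀Ioo.2)
      have hw'0 : w' r₀ = 0 := hloc.hasDerivAt_eq_zero (hw1 r₀ hr₀Ioo)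
      have hcg : ContinuousAt g r₀ :=
        ((continuous_pow (m+1)).continuousAt).mul (hw2 r₀ hr₀Ioo).continuousAt
      have : Tendsto g (𝓝 r₀) (𝓝 0) := by
        have := hcg.tendsto
        simpa [hgdef, hw'0] using this
      exact this.mono_left nhdsWithin_le_nhds
    · -- r₀ = 0
      have h1 : Tendsto (fun s : ℝ => s^(m+1)) (𝓝[>] (0:ℝ)) (𝓝 0) := by
        have := ((continuous_pow (m+1)).tendsto (0:ℝ)).mono_left
          (nhdsWithin_le_nhds (s := Ioi (0:ℝ)))
        simpa using this
      rw [← h0]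
      simpa [hgdef] using h1.mul hlim
  -- derivative of g
  have hgderiv : ∀ s ∈ Ioo (0:ℝ) Rs,
      HasDerivAt g (((m:ℝ)+1) * s^m * w' s + s^(m+1) * w'' s) s := by
    intro s hs
    have h := (hasDerivAt_pow (m+1) s).mul (hw2 s hs)
    refine h.congr_deriv ?_
    simp [Nat.succ_sub_one]
  have hgd_eq : ∀ s ∈ Ioo r₀ b, ((m:ℝ)+1) * s^m * w' s + s^(m+1) * w'' s
      = s^(m+1) * (q s * w s) := by
    intro s hs
    have hsIoo : s ∈ Ioo 0 Rs := ⟨lt_of_le_of_lt hr₀0 hs.1, lt_of_lt_of_le hs.2 hbRs⟩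
    have h := hode s hsIoo
    have hs0 : s ≠ 0 := ne_of_gt hsIoo.1
    field_simp at h
    linear_combination s^m * h
  -- g monotone on subintervals of (r₀, b)
  have hgmono : ∀ ε r, r₀ < ε → ε ≤ r → r < b → g ε ≤ g r := by
    intro ε r hε hεr hrb
    have hsub : Icc ε r ⊆ Ioo 0 Rs := fun x hx =>
      ⟨lt_of_le_of_lt hr₀0 (lt_of_lt_of_le hε hx.1),
        lt_of_le_of_lt hx.2 (lt_of_lt_of_le hrb hbRs)⟩
    refine monotoneOn_of_deriv_nonneg (convex_Icc ε r) ?_ ?_ ?_ ⟨le_rfl, hεr⟩ ⟨hεr, le_rfl⟩ hεr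
    · exact fun x hx => ((hgderiv x (hsub hx)).continuousAt).continuousWithinAt
    · intro x hx
      rw [interior_Icc] at hx
      exact ((hgderiv x (hsub (Ioo_subset_Icc_self hx))).differentiableAt).differentiableWithinAt
    · intro x hx
      rw [interior_Icc] at hx
      have hxIoo : x ∈ Ioo 0 Rs := hsub (Ioo_subset_Icc_self hx)
      rw [(hgderiv x hxIoo).deriv, hgd_eq x ⟨lt_trans hε hx.1, lt_trans hx.2 hrb⟩]
      have hqx := hq x hxIoo
      have hwx := hwpos x ⟨(lt_trans hε hx.1).le, lt_trans hx.2 hrb⟩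
      exact mul_nonneg (pow_nonneg hxIoo.1.le _) (mul_nonneg hqx.le hwx.le)
  -- w' ≥ 0 on (r₀, b)
  have hw'nn : ∀ r ∈ Ioo r₀ b, 0 ≤ w' r := by
    intro r hr
    have hgr : 0 ≤ g r := by
      refine le_of_tendsto hg0 ?_
      filter_upwards [Ioo_mem_nhdsGT hr.1] with ε hε
      exact hgmono ε r hε.1 hε.2.le hr.2
    have hrpos : 0 < r := lt_of_le_of_lt hr₀0 hr.1
    have hp : 0 < r^(m+1) := pow_pos hrpos (m+1)
    have hgr' : 0 ≤ r^(m+1) * w' r := hgr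
    by_contra hneg
    push_neg at hneg
    nlinarith [mul_pos hp (neg_pos.2 hneg)]
  -- w monotone near b
  have hwmono : ∀ ε, r₀ < ε → ε < b → w ε ≤ w b := by
    intro ε hε hεb
    have hsub2 : Ioo ε b ⊆ Ioo 0 Rs := fun x hx =>
      ⟨lt_of_le_of_lt hr₀0 (lt_of_lt_of_le hε hx.1.le), lt_of_lt_of_le hx.2 hbRs⟩
    refine monotoneOn_of_deriv_nonneg (convex_Icc ε b)
      (hwc.mono (Icc_subset_Icc (le_trans hr₀0 hε.le) hbRs)) ?_ ?_
      ⟨le_rfl, hεb.le⟩ ⟨hεb.le, le_rfl⟩ hεb.le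
    · intro x hx
      rw [interior_Icc] at hx
      exact ((hw1 x (hsub2 hx)).differentiableAt).differentiableWithinAt
    · intro x hx
      rw [interior_Icc] at hx
      rw [(hw1 x (hsub2 hx)).deriv]
      exact hw'nn x ⟨lt_trans hε hx.1, hx.2⟩
  have hfinal : w r₀ ≤ w b := by
    have htd : Tendsto w (𝓝[>] r₀) (𝓝 (w r₀)) := by
      have h1 : ContinuousWithinAt w (Icc 0 Rs) r₀ := hwc r₀ hr₀mem
      have h2 : Tendsto w (𝓝[Ioo r₀ b] r₀) (𝓝 (w r₀)) :=
        h1.tendsto.mono_left (nhdsWithin_mono _ (fun x hx =>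
          ⟨(lt_of_le_of_lt hr₀0 hx.1).le, le_trans hx.2.le hbRs⟩))
      have h3 : 𝓝[Ioo r₀ b] r₀ = 𝓝[>] r₀ := by
        rw [← Ioi_inter_Iio, ← nhdsWithin_restrict' (Ioi r₀) (Iio_mem_nhds hr₀b)]
      rwa [h3] at h2
    refine le_of_tendsto htd ?_
    filter_upwards [Ioo_mem_nhdsGT hr₀b] with ε hε
    exact hwmono ε hε.1 hε.2
  rw [hwb] at hfinal
  exact absurd hfinal (not_le.2 hM)


/-- Lemma 3.3, assertion (4): `u₁(r) = R_s c_s'(r)/(r c_s'(R_s))` (extended by continuity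
at `r = 0` with value `R_s c_s''(0)/c_s'(R_s)`) is the unique
`u ∈ C([0,R_s]) ∩ C²((0,R_s))` with `u'' + ((n+1)/r) u' = F'(c_s) u` on `(0,R_s)`,
`lim_{r→0⁺} u'(r) = 0` and `u(R_s) = 1`. -/
theorem stmt_4
    (n : ℕ) (hn : 2 ≤ n) (Rs : ℝ) (hRs : 0 < Rs)
    (F F' : ℝ → ℝ) (hF : ∀ x : ℝ, HasDerivAt F (F' x) x) (hF'cont : Continuous F')
    (cs cs' cs'' cs''' : ℝ → ℝ)
    (hcs1 : ∀ r ∈ Icc (0:ℝ) Rs, HasDerivAt cs (cs' r) r)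
    (hcs2 : ∀ r ∈ Icc (0:ℝ) Rs, HasDerivAt cs' (cs'' r) r)
    (hcs3 : ∀ r ∈ Icc (0:ℝ) Rs, HasDerivAt cs'' (cs''' r) r)
    (hcs3cont : ContinuousOn cs''' (Icc 0 Rs))
    (hcsode : ∀ r ∈ Ioo (0:ℝ) Rs, cs'' r + ((n - 1 : ℝ) / r) * cs' r = F (cs r))
    (hcs'0 : cs' 0 = 0) (hcsRs : cs Rs = 1)
    (hcs'pos : ∀ r ∈ Ioc (0:ℝ) Rs, 0 < cs' r)
    (hF'pos : ∀ r ∈ Icc (0:ℝ) Rs, 0 < F' (cs r))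
    (u₁ : ℝ → ℝ)
    (hu₁def : u₁ = fun r => if r = 0 then Rs * cs'' 0 / cs' Rs
      else Rs * cs' r / (r * cs' Rs)) :
    (ContinuousOn u₁ (Icc 0 Rs) ∧
      ∃ u₁' u₁'' : ℝ → ℝ,
        (∀ r ∈ Ioo (0:ℝ) Rs, HasDerivAt u₁ (u₁' r) r) ∧
        (∀ r ∈ Ioo (0:ℝ) Rs, HasDerivAt u₁' (u₁'' r) r) ∧
        (∀ r ∈ Ioo (0:ℝ) Rs, u₁'' r + ((n + 1 : ℝ) / r) * u₁' r = F' (cs r) * u₁ r) ∧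
        Tendsto u₁' (𝓝[>] (0:ℝ)) (𝓝 0) ∧
        u₁ Rs = 1) ∧
    (∀ u u' u'' : ℝ → ℝ,
      ContinuousOn u (Icc 0 Rs) →
      (∀ r ∈ Ioo (0:ℝ) Rs, HasDerivAt u (u' r) r) →
      (∀ r ∈ Ioo (0:ℝ) Rs, HasDerivAt u' (u'' r) r) →
      (∀ r ∈ Ioo (0:ℝ) Rs, u'' r + ((n + 1 : ℝ) / r) * u' r = F' (cs r) * u r) →
      Tendsto u' (𝓝[>] (0:ℝ)) (𝓝 0) →
      u Rs = 1 →
      ∀ r ∈ Icc (0:ℝ) Rs, u r = u₁ r) := by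
  have hRs0 : (Rs:ℝ) ≠ 0 := ne_of_gt hRs
  have hcs'Rs : 0 < cs' Rs := hcs'pos Rs ⟨hRs, le_rfl⟩
  have hcs'Rs0 : cs' Rs ≠ 0 := ne_of_gt hcs'Rs
  set K : ℝ := Rs / cs' Rs with hK
  set v' : ℝ → ℝ := fun r => K * ((cs'' r * r - cs' r) / r^2) with hv'
  set v'' : ℝ → ℝ := fun r => K * ((cs''' r * r^2 - 2*r*(cs'' r) + 2*(cs' r)) / r^3) with hv''
  have hu₁eq : ∀ r : ℝ, r ≠ 0 → u₁ r = K * (cs' r / r) := by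
    intro r hr
    rw [hu₁def]
    simp only [if_neg hr, hK]
    rw [mul_comm r (cs' Rs), mul_div_mul_comm]
  -- derivative of u₁ on (0, Rs)
  have hu₁d : ∀ r ∈ Ioo (0:ℝ) Rs, HasDerivAt u₁ (v' r) r := by
    intro r hr
    have hr0 : r ≠ 0 := ne_of_gt hr.1
    have hIcc : r ∈ Icc (0:ℝ) Rs := ⟨hr.1.le, hr.2.le⟩
    have hd : HasDerivAt (fun x => K * (cs' x / x))
        (K * ((cs'' r * r - cs' r * 1) / r^2)) r :=
      (((hcs2 r hIcc).div (hasDerivAt_id r) hr0)).const_mul K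
    have hd' : HasDerivAt (fun x => K * (cs' x / x)) (v' r) r := by
      convert hd using 1
      simp only [hv']
      ring
    refine hd'.congr_of_eventuallyEq ?_
    filter_upwards [isOpen_compl_singleton.mem_nhds (by simpa using hr0 : r ∈ ({0}ᶜ : Set ℝ))]
      with x hx
    exact hu₁eq x hx
  -- second derivative
  have hv'd : ∀ r ∈ Ioo (0:ℝ) Rs, HasDerivAt v' (v'' r) r := by
    intro r hr
    have hr0 : r ≠ 0 := ne_of_gt hr.1
    have hIcc : r ∈ Icc (0:ℝ) Rs := ⟨hr.1.le, hr.2.le⟩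
    have hN : HasDerivAt (fun x => cs'' x * x - cs' x)
        (cs''' r * r + cs'' r * 1 - cs'' r) r :=
      ((hcs3 r hIcc).mul (hasDerivAt_id r)).sub (hcs2 r hIcc)
    have hD : HasDerivAt (fun x : ℝ => x^2) ((2:ℝ)*r^1) r := by
      simpa using hasDerivAt_pow 2 r
    have hr2 : r^2 ≠ 0 := pow_ne_zero 2 hr0
    have h := (hN.div hD hr2).const_mul K
    refine h.congr_deriv ?_
    simp only [hv'']
    field_simp
    ring
  -- differentiated ODE for cs
  have hdiff : ∀ r ∈ Ioo (0:ℝ) Rs,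
      cs''' r + ((n:ℝ) - 1) * ((cs'' r * r - cs' r * 1) / r^2) = F' (cs r) * cs' r := by
    intro r hr
    have hr0 : r ≠ 0 := ne_of_gt hr.1
    have hIcc : r ∈ Icc (0:ℝ) Rs := ⟨hr.1.le, hr.2.le⟩
    have hP : HasDerivAt (fun x => cs'' x + ((n:ℝ)-1) * (cs' x / x))
        (cs''' r + ((n:ℝ)-1) * ((cs'' r * r - cs' r * 1)/r^2)) r :=
      (hcs3 r hIcc).add (((hcs2 r hIcc).div (hasDerivAt_id r) hr0).const_mul ((n:ℝ)-1))
    have hQ : HasDerivAt (fun x => F (cs x)) (F' (cs r) * cs' r) r :=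
      (hF (cs r)).comp r (hcs1 r hIcc)
    have hEq : (fun x => cs'' x + ((n:ℝ)-1) * (cs' x / x)) =ᶠ[𝓝 r] (fun x => F (cs x)) := by
      filter_upwards [isOpen_Ioo.mem_nhds hr] with x hx
      rw [← hcsode x hx]
      ring
    exact hP.unique (hQ.congr_of_eventuallyEq hEq)
  -- ODE for u₁
  have hODE : ∀ r ∈ Ioo (0:ℝ) Rs,
      v'' r + ((n:ℝ) + 1) / r * v' r = F' (cs r) * u₁ r := by
    intro r hr
    have hr0 : r ≠ 0 := ne_of_gt hr.1
    have h := hdiff r hr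
    rw [hu₁eq r hr0]
    simp only [hv', hv'']
    field_simp at h ⊢
    linear_combination K * h
  -- continuity of u₁
  have hcont : ContinuousOn u₁ (Icc 0 Rs) := by
    intro x hx
    rcases eq_or_ne x 0 with rfl | hx0
    · have hs : Tendsto (slope cs' 0) (𝓝[≠] (0:ℝ)) (𝓝 (cs'' 0)) :=
        hasDerivAt_iff_tendsto_slope.mp (hcs2 0 ⟨le_rfl, hRs.le⟩)
      have hs' : Tendsto (fun r => K * (cs' r / r)) (𝓝[≠] (0:ℝ)) (𝓝 (K * cs'' 0)) := by
        apply Tendsto.const_mul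
        refine hs.congr ?_
        intro r
        simp [slope_def_field, hcs'0]
      rw [← continuousWithinAt_diff_self]
      have hmem : ∀ᶠ r in 𝓝[Icc (0:ℝ) Rs \ {0}] (0:ℝ), K * (cs' r / r) = u₁ r := by
        filter_upwards [self_mem_nhdsWithin] with r hr
        exact (hu₁eq r hr.2).symm
      have hmono : 𝓝[Icc (0:ℝ) Rs \ {0}] (0:ℝ) ≤ 𝓝[≠] (0:ℝ) :=
        nhdsWithin_mono _ (fun r hr => hr.2)
      have hT : Tendsto u₁ (𝓝[Icc (0:ℝ) Rs \ {0}] 0) (𝓝 (K * cs'' 0)) :=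
        (hs'.mono_left hmono).congr' hmem
      have hval : u₁ 0 = K * cs'' 0 := by
        simp only [hu₁def]
        norm_num
        rw [hK]
        ring
      rw [ContinuousWithinAt, hval]
      exact hT
    · have hfa : ContinuousAt (fun r => K * (cs' r / r)) x :=
        continuousAt_const.mul (((hcs2 x hx).continuousAt).div continuousAt_id hx0)
      have hev : (fun r => K * (cs' r / r)) =ᶠ[𝓝 x] u₁ := by
        filter_upwards [isOpen_compl_singleton.mem_nhds (by simpa using hx0 : x ∈ ({0}ᶜ : Set ℝ))]
          with r hr
        exact (hu₁eq r hr).symm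
      exact (hfa.congr hev).continuousWithinAt
  -- restrict trick: 𝓝[Ioo 0 Rs] 0 = 𝓝[>] 0
  have hres : 𝓝[Ioo (0:ℝ) Rs] (0:ℝ) = 𝓝[>] (0:ℝ) := by
    rw [← Ioi_inter_Iio, ← nhdsWithin_restrict' (Ioi (0:ℝ)) (Iio_mem_nhds hRs)]
  -- l'Hopital: (cs'' r * r - cs' r)/r^2 → cs'''(0)/2
  have hLH : Tendsto (fun r => (cs'' r * r - cs' r)/ r^2) (𝓝[>] (0:ℝ)) (𝓝 (cs''' 0 / 2)) := by
    have h0Icc : (0:ℝ) ∈ Icc (0:ℝ) Rs := ⟨le_rfl, hRs.le⟩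
    refine HasDerivAt.lhopital_zero_right_on_Ioo hRs
      (f' := fun x => cs''' x * x + cs'' x * 1 - cs'' x) (g' := fun x => (2:ℝ)*x^1)
      (fun x hx => ((hcs3 x ⟨hx.1.le, hx.2.le⟩).mul (hasDerivAt_id x)).sub
        (hcs2 x ⟨hx.1.le, hx.2.le⟩))
      (fun x hx => by simpa using hasDerivAt_pow 2 x)
      (fun x hx => by
        have := hx.1
        positivity)
      ?_ ?_ ?_
    · -- f → 0
      have hc : ContinuousAt (fun r => cs'' r * r - cs' r) 0 :=
        ((hcs3 0 h0Icc).continuousAt.mul continuousAt_id).sub (hcs2 0 h0Icc).continuousAt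
      have := hc.tendsto.mono_left (nhdsWithin_le_nhds (s := Ioi (0:ℝ)))
      simpa [hcs'0] using this
    · have : Tendsto (fun r : ℝ => r^2) (𝓝 (0:ℝ)) (𝓝 ((0:ℝ)^2)) :=
        (continuous_pow 2).tendsto 0
      simpa using this.mono_left (nhdsWithin_le_nhds (s := Ioi (0:ℝ)))
    · -- quotient of derivatives
      have hT : Tendsto (fun x => cs''' x / 2) (𝓝[>] (0:ℝ)) (𝓝 (cs''' 0 / 2)) := by
        have h1 : Tendsto cs''' (𝓝[Icc (0:ℝ) Rs] 0) (𝓝 (cs''' 0)) := hcs3cont 0 h0Icc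
        have h2 : Tendsto cs''' (𝓝[>] (0:ℝ)) (𝓝 (cs''' 0)) := by
          rw [← hres]
          exact h1.mono_left (nhdsWithin_mono _ (fun x hx => ⟨hx.1.le, hx.2.le⟩))
        exact h2.div_const 2
      refine hT.congr' ?_
      filter_upwards [self_mem_nhdsWithin] with x (hx : x ∈ Ioi (0:ℝ))
      have hx0 : x ≠ 0 := ne_of_gt hx
      field_simp
      ring
  -- cs'''(0) = 0
  have hc3 : cs''' 0 = 0 := by
    have hn1 : ((n:ℝ) - 1) ≠ 0 := by
      have : (2:ℝ) ≤ (n:ℝ) := by exact_mod_cast hn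
      linarith
    have h0Icc : (0:ℝ) ∈ Icc (0:ℝ) Rs := ⟨le_rfl, hRs.le⟩
    have hT2 : Tendsto (fun r => (cs'' r * r - cs' r)/r^2) (𝓝[>] (0:ℝ))
        (𝓝 ((F' (cs 0) * cs' 0 - cs''' 0)/((n:ℝ)-1))) := by
      have hcont2 : Tendsto (fun r => (F' (cs r) * cs' r - cs''' r)/((n:ℝ)-1))
          (𝓝[>] (0:ℝ)) (𝓝 ((F' (cs 0) * cs' 0 - cs''' 0)/((n:ℝ)-1))) := by
        have hcsC : Tendsto cs (𝓝[>] (0:ℝ)) (𝓝 (cs 0)) :=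
          (hcs1 0 h0Icc).continuousAt.tendsto.mono_left nhdsWithin_le_nhds
        have hcs'C : Tendsto cs' (𝓝[>] (0:ℝ)) (𝓝 (cs' 0)) :=
          (hcs2 0 h0Icc).continuousAt.tendsto.mono_left nhdsWithin_le_nhds
        have hcs3C : Tendsto cs''' (𝓝[>] (0:ℝ)) (𝓝 (cs''' 0)) := by
          rw [← hres]
          exact (hcs3cont 0 h0Icc).tendsto.mono_left
            (nhdsWithin_mono _ (fun x hx => ⟨hx.1.le, hx.2.le⟩))
        exact (((hF'cont.continuousAt.tendsto.comp hcsC).mul hcs'C).sub hcs3C).div_const _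
      refine hcont2.congr' ?_
      rw [← hres]
      filter_upwards [self_mem_nhdsWithin] with x (hx : x ∈ Ioo (0:ℝ) Rs)
      have h := hdiff x hx
      have hx0 : x ≠ 0 := ne_of_gt hx.1
      field_simp at h ⊢
      linarith [h]
    have huniq := tendsto_nhds_unique hLH hT2
    rw [hcs'0] at huniq
    have : (2:ℝ) ≤ (n:ℝ) := by exact_mod_cast hn
    field_simp at huniq
    nlinarith [huniq]
  -- limit of v'
  have hlim' : Tendsto v' (𝓝[>] (0:ℝ)) (𝓝 0) := by
    have h := hLH.const_mul K
    rw [hc3] at h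
    simpa [hv'] using h
  -- value at Rs
  have hu₁Rs : u₁ Rs = 1 := by
    rw [hu₁def]
    simp only [if_neg hRs0]
    rw [div_self (mul_ne_zero hRs0 hcs'Rs0)]
  refine ⟨⟨hcont, v', v'', hu₁d, hv'd, ?_, hlim', hu₁Rs⟩, ?_⟩
  · intro r hr
    exact hODE r hr
  · -- uniqueness
    intro u hu' hu'' hc hd1 hd2 hode hl huRs r hr
    have hq : ∀ s ∈ Ioo (0:ℝ) Rs, 0 < F' (cs s) := fun s hs => hF'pos s ⟨hs.1.le, hs.2.le⟩
    have h1 := maxp Rs hRs n (fun s => F' (cs s)) hq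
      (fun s => u s - u₁ s) (fun s => hu' s - v' s) (fun s => hu'' s - v'' s)
      (hc.sub hcont)
      (fun s hs => (hd1 s hs).sub (hu₁d s hs))
      (fun s hs => (hd2 s hs).sub (hv'd s hs))
      (fun s hs => by
        have hA := hode s hs
        have hB := hODE s hs
        show hu'' s - v'' s + ((n:ℝ)+1)/s * (hu' s - v' s) = F' (cs s) * (u s - u₁ s)
        linear_combination hA - hB)
      (by simpa using hl.sub hlim')
      (by show u Rs - u₁ Rs = 0; rw [huRs, hu₁Rs]; ring)
      r hr
    have h2 := maxp Rs hRs n (fun s => F' (cs s)) hq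
      (fun s => u₁ s - u s) (fun s => v' s - hu' s) (fun s => v'' s - hu'' s)
      (hcont.sub hc)
      (fun s hs => (hu₁d s hs).sub (hd1 s hs))
      (fun s hs => (hv'd s hs).sub (hd2 s hs))
      (fun s hs => by
        have hA := hode s hs
        have hB := hODE s hs
        show v'' s - hu'' s + ((n:ℝ)+1)/s * (v' s - hu' s) = F' (cs s) * (u₁ s - u s)
        linear_combination hB - hA)
      (by simpa using hlim'.sub hl)
      (by show u₁ Rs - u Rs = 0; rw [huRs, hu₁Rs]; ring)
      r hr
    have h1' : u r - u₁ r ≤ 0 := h1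
    have h2' : u₁ r - u r ≤ 0 := h2
    linarith
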